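/- A conditionally-smooth fitness landscape has exactly one local peak, which is the global peak x*. -/

import Mathlib

variable {n : ℕ}

/-- Flip bit `i` of assignment `x`. -/
def flipBit (x : Fin n → Bool) (i : Fin n) : Fin n → Bool :=
  Function.update x i (!(x i))

/-- `x` is a local peak of the fitness landscape `f`. -/
def LocalPeak (f : (Fin n → Bool) → ℤ) (x : Fin n → Bool) : Prop :=
  ∀ i, f (flipBit x i) ≤ f x

/-- `f` is `≺`-smooth with optimum `xs`. -/
def PrecSmooth (r : Fin n → Fin n → Prop) (f : (Fin n → Bool) → ℤ)
    (xs : Fin n → Bool) : Prop :=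
  ∀ (j : Fin n) (x : Fin n → Bool), (∀ i, r i j → x i = xs i) →
    f (Function.update x j (xs j)) > f (Function.update x j (!(xs j)))

/-- A conditionally-smooth fitness landscape has exactly one local peak,
which is the global peak `xs`. -/
theorem conditionallySmooth_unique_local_peak
    (f : (Fin n → Bool) → ℤ) (r : Fin n → Fin n → Prop)
    (hr : IsStrictOrder (Fin n) r) (xs : Fin n → Bool)
    (hs : PrecSmooth r f xs) :
    LocalPeak f xs ∧ (∀ y, LocalPeak f y → y = xs) ∧ (∀ y, f y ≤ f xs) := by
  haveI := hr.toIrrefl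
  haveI := hr.toIsTrans
  have hw : WellFounded r := Finite.wellFounded_of_trans_of_irrefl r
  -- key improvement step
  have key : ∀ y : Fin n → Bool, y ≠ xs →
      ∃ j, y j ≠ xs j ∧ f y < f (Function.update y j (xs j)) := by
    intro y hy
    have hne : {j | y j ≠ xs j}.Nonempty := by
      obtain ⟨j, hj⟩ := Function.ne_iff.mp hy
      exact ⟨j, hj⟩
    obtain ⟨j, hj, hmin⟩ := hw.has_min _ hne
    refine ⟨j, hj, ?_⟩
    have h1 : ∀ i, r i j → y i = xs i := by
      intro i hij
      by_contra h
      exact hmin i h hij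
    have h2 := hs j y h1
    have hyj : y j = !(xs j) := by
      rw [Bool.eq_not_iff]; exact hj
    rw [← hyj, Function.update_eq_self] at h2
    exact h2
  have hpeak : LocalPeak f xs := by
    intro i
    have h2 := hs i xs (fun _ _ => rfl)
    rw [Function.update_eq_self] at h2
    exact h2.le
  refine ⟨hpeak, ?_, ?_⟩
  · intro y hy
    by_contra h
    obtain ⟨j, hj, hlt⟩ := key y h
    have hyj : xs j = !(y j) := by
      rw [Bool.eq_not_iff]; exact Ne.symm hj
    rw [hyj] at hlt
    exact absurd (hy j) (by simpa [flipBit] using hlt.not_ge)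
  · have glob : ∀ k (y : Fin n → Bool),
        (Finset.univ.filter (fun i => y i ≠ xs i)).card ≤ k → f y ≤ f xs := by
      intro k
      induction k with
      | zero =>
        intro y hy
        have : y = xs := by
          funext i
          by_contra hi
          have : i ∈ Finset.univ.filter (fun i => y i ≠ xs i) := by simp [hi]
          have := Finset.card_pos.mpr ⟨i, this⟩
          omega
        rw [this]
      | succ k ih =>
        intro y hy
        by_cases h : y = xs
        · rw [h]
        · obtain ⟨j, hj, hlt⟩ := key y h
          have hsub : Finset.univ.filter
              (fun i => Function.update y j (xs j) i ≠ xs i) ⊆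
              (Finset.univ.filter (fun i => y i ≠ xs i)).erase j := by
            intro i hi
            simp only [Finset.mem_filter, Finset.mem_univ, true_and] at hi
            rcases eq_or_ne i j with rfl | hij
            · simp [Function.update_self] at hi
            · rw [Finset.mem_erase]
              refine ⟨hij, ?_⟩
              simp only [Finset.mem_filter, Finset.mem_univ, true_and]
              rwa [Function.update_of_ne hij] at hi
          have hjmem : j ∈ Finset.univ.filter (fun i => y i ≠ xs i) := by
            simp [hj]
          have hcard : (Finset.univ.filter
              (fun i => Function.update y j (xs j) i ≠ xs i)).card ≤ k := by
            have h1 := Finset.card_le_card hsub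
            have h2 := Finset.card_erase_of_mem hjmem
            have h3 := Finset.card_pos.mpr ⟨j, hjmem⟩
            omega
          exact hlt.le.trans (ih _ hcard)
    intro y
    exact glob _ y le_rfl
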